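/- Let G act sharply 2-transitively on a finite set X with |X| = n ≥ 2. Then the set N consisting of the identity and all fixed-point-free elements of G acts transitively on X and has exactly n elements. -/
import Mathlib

theorem sharply_two_transitive_fpf_set
    {G : Type*} [Group G] {X : Type*} [Finite X] [MulAction G X] {n : ℕ}
    (hcard : Nat.card X = n) (hn : 2 ≤ n)
    (hS : ∀ a b c d : X, a ≠ b → c ≠ d →
      ∃! g : G, g • a = c ∧ g • b = d) :
    (∀ x y : X, ∃ g ∈ {g : G | g = 1 ∨ ∀ x : X, g • x ≠ x}, g • x = y) ∧
    Nat.card {g : G | g = 1 ∨ ∀ x : X, g • x ≠ x} = n := by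
  have hXnt : Nontrivial X := by
    rw [← Finite.one_lt_card_iff_nontrivial, hcard]; omega
  have ext2 : ∀ (a b : X) (g h : G), a ≠ b → g • a = h • a → g • b = h • b → g = h := by
    intro a b g h hab h1 h2
    have hcd : g • a ≠ g • b := fun e => hab (MulAction.injective g e)
    obtain ⟨k, _, huniq⟩ := hS a b (g • a) (g • b) hab hcd
    have e1 := huniq g ⟨rfl, rfl⟩
    have e2 := huniq h ⟨h1.symm, h2.symm⟩
    rw [e1, e2]
  -- key lemma: for x ≠ y there is a unique fixed-point-free g with g • x = y
  have key : ∀ x y : X, x ≠ y → ∃! g : G, g • x = y ∧ ∀ z : X, g • z ≠ z := by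
    intro x y hxy
    obtain ⟨x', hx'⟩ := exists_ne x
    set S : Set G := {g : G | g • x = y} with hSdef
    set T : Set G := {g : G | g • x = y ∧ ∃ z : X, g • z = z} with hTdef
    have hTS : T ⊆ S := fun g hg => hg.1
    -- card S = n - 1
    let f1 : ↥S → ↥({y}ᶜ : Set X) := fun g =>
      ⟨g.1 • x', by
        simp only [Set.mem_compl_iff, Set.mem_singleton_iff]
        intro e
        exact hx' (MulAction.injective g.1 (e.trans g.2.symm))⟩
    have f1bij : Function.Bijective f1 := by
      constructor
      · rintro ⟨g, hg⟩ ⟨h, hh⟩ he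
        have he' : g • x' = h • x' := congrArg Subtype.val he
        exact Subtype.ext (ext2 x x' g h (Ne.symm hx') (hg.trans hh.symm) he')
      · rintro ⟨z, hz⟩
        simp only [Set.mem_compl_iff, Set.mem_singleton_iff] at hz
        obtain ⟨g, hg, -⟩ := hS x x' y z (Ne.symm hx') (Ne.symm hz)
        exact ⟨⟨g, hg.1⟩, Subtype.ext hg.2⟩
    have cardS : Nat.card ↥S = n - 1 := by
      rw [Nat.card_eq_of_bijective f1 f1bij]
      rw [Nat.card_coe_set_eq]
      have := Set.ncard_add_ncard_compl ({y} : Set X)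
      rw [Set.ncard_singleton, hcard] at this
      omega
    -- card T = n - 2
    have hP : ∀ z : X, z ∈ ({x, y}ᶜ : Set X) → x ≠ z ∧ y ≠ z := by
      intro z hz
      simp only [Set.mem_compl_iff, Set.mem_insert_iff, Set.mem_singleton_iff, not_or] at hz
      exact ⟨fun e => hz.1 e.symm, fun e => hz.2 e.symm⟩
    let f2 : ↥({x, y}ᶜ : Set X) → ↥T := fun z =>
      ⟨(hS x z.1 y z.1 (hP z.1 z.2).1 (hP z.1 z.2).2).choose, by
        have hspec := (hS x z.1 y z.1 (hP z.1 z.2).1 (hP z.1 z.2).2).choose_spec.1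
        exact ⟨hspec.1, ⟨z.1, hspec.2⟩⟩⟩
    have f2bij : Function.Bijective f2 := by
      constructor
      · rintro ⟨z₁, hz₁⟩ ⟨z₂, hz₂⟩ he
        have hgg : (hS x z₁ y z₁ (hP z₁ hz₁).1 (hP z₁ hz₁).2).choose
            = (hS x z₂ y z₂ (hP z₂ hz₂).1 (hP z₂ hz₂).2).choose := congrArg Subtype.val he
        have h1 := (hS x z₁ y z₁ (hP z₁ hz₁).1 (hP z₁ hz₁).2).choose_spec.1
        have h2 := (hS x z₂ y z₂ (hP z₂ hz₂).1 (hP z₂ hz₂).2).choose_spec.1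
        rw [← hgg] at h2
        by_contra hne
        have hne' : z₁ ≠ z₂ := fun e => hne (Subtype.ext e)
        have hone : (hS x z₁ y z₁ (hP z₁ hz₁).1 (hP z₁ hz₁).2).choose = 1 :=
          ext2 z₁ z₂ _ 1 hne' (by rw [h1.2, one_smul]) (by rw [h2.2, one_smul])
        rw [hone, one_smul] at h1
        exact hxy h1.1
      · rintro ⟨g, hgx, z, hgz⟩
        have hzx : z ≠ x := by
          intro e; subst e; exact hxy (hgz.symm.trans hgx)
        have hzy : z ≠ y := by
          intro e; subst e
          exact hxy (MulAction.injective g (hgx.trans hgz.symm))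
        have hzmem : z ∈ ({x, y}ᶜ : Set X) := by
          simp only [Set.mem_compl_iff, Set.mem_insert_iff, Set.mem_singleton_iff, not_or]
          exact ⟨hzx, hzy⟩
        refine ⟨⟨z, hzmem⟩, ?_⟩
        have := (hS x z y z (hP z hzmem).1 (hP z hzmem).2).choose_spec.2 g ⟨hgx, hgz⟩
        exact Subtype.ext this.symm
    have cardT : Nat.card ↥T = n - 2 := by
      rw [← Nat.card_eq_of_bijective f2 f2bij]
      rw [Nat.card_coe_set_eq]
      have := Set.ncard_add_ncard_compl ({x, y} : Set X)
      rw [Set.ncard_pair hxy, hcard] at this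
      omega
    have hSfin : S.Finite := by
      have : Finite ↥({y}ᶜ : Set X) := Subtype.finite
      have : Finite ↥S := Finite.of_injective f1 f1bij.1
      exact S.toFinite
    have hTfin : T.Finite := hSfin.subset hTS
    have ncS : S.ncard = n - 1 := by rw [← Nat.card_coe_set_eq]; exact cardS
    have ncT : T.ncard = n - 2 := by rw [← Nat.card_coe_set_eq]; exact cardT
    -- existence
    have hnotsub : ¬ S ⊆ T := by
      intro h
      have : S = T := subset_antisymm h hTS
      rw [this, ncT] at ncS
      omega
    obtain ⟨g, hgS, hgT⟩ := Set.not_subset.mp hnotsub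
    have hgfpf : ∀ z : X, g • z ≠ z := by
      intro z hz
      exact hgT ⟨hgS, z, hz⟩
    refine ⟨g, ⟨hgS, hgfpf⟩, ?_⟩
    -- uniqueness
    rintro h ⟨hhS, hhfpf⟩
    by_contra hne
    have hhT : h ∉ T := fun ht => hhfpf ht.2.choose ht.2.choose_spec
    have hgi : g ∉ insert h T := by
      simp only [Set.mem_insert_iff, not_or]
      exact ⟨fun e => hne e.symm, hgT⟩
    have hsub : insert g (insert h T) ⊆ S := by
      intro k hk
      rcases hk with rfl | hk
      · exact hgS
      rcases hk with rfl | hk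
      · exact hhS
      · exact hTS hk
    have hc1 : (insert h T).ncard = n - 2 + 1 := by
      rw [Set.ncard_insert_of_notMem hhT hTfin, ncT]
    have hc2 : (insert g (insert h T)).ncard = n - 2 + 2 := by
      rw [Set.ncard_insert_of_notMem hgi (hTfin.insert h), hc1]
    have := Set.ncard_le_ncard hsub hSfin
    rw [hc2, ncS] at this
    omega
  constructor
  · intro x y
    rcases eq_or_ne x y with rfl | hxy
    · exact ⟨1, Or.inl rfl, one_smul G x⟩
    · obtain ⟨g, ⟨hgx, hgf⟩, -⟩ := key x y hxy
      exact ⟨g, Or.inr hgf, hgx⟩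
  · obtain ⟨x₀⟩ := (inferInstance : Nonempty X)
    let N : Set G := {g : G | g = 1 ∨ ∀ x : X, g • x ≠ x}
    let F : ↥N → X := fun g => g.1 • x₀
    have Fbij : Function.Bijective F := by
      constructor
      · rintro ⟨g, hg⟩ ⟨h, hh⟩ he
        have he' : g • x₀ = h • x₀ := he
        apply Subtype.ext
        rcases hg with rfl | hg
        · rcases hh with rfl | hh
          · rfl
          · rw [one_smul] at he'
            exact absurd he'.symm (hh x₀)
        · rcases hh with rfl | hh
          · rw [one_smul] at he'
            exact absurd he' (hg x₀)
          · have hxy : x₀ ≠ g • x₀ := fun e => hg x₀ e.symm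
            obtain ⟨k, -, huniq⟩ := key x₀ (g • x₀) hxy
            have e1 := huniq g ⟨rfl, hg⟩
            have e2 := huniq h ⟨he'.symm, hh⟩
            exact e1.trans e2.symm
      · intro y
        rcases eq_or_ne x₀ y with rfl | hxy
        · exact ⟨⟨1, Or.inl rfl⟩, one_smul G x₀⟩
        · obtain ⟨g, ⟨hgx, hgf⟩, -⟩ := key x₀ y hxy
          exact ⟨⟨g, Or.inr hgf⟩, hgx⟩
    rw [Nat.card_eq_of_bijective F Fbij, hcard]
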